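/- With Q_n the Hamilton–Jacobi polynomials defined by Q₀ = 1 and Q_n = Σ_{k=1}^{n} Σ_{s₁+⋯+s_{2k}=n−k} a_k ∏_{i=1}^{2k} D(2s_i−1)Q_{s_i}: for every n ≥ 1, every monomial X₀^{k₀}X₁^{k₁}⋯X_n^{k_n} occurring in Q_n with nonzero coefficient satisfies k₀ < n (equivalently k₁+⋯+k_n > n). -/

import Mathlib

open MvPolynomial

/-- The derivation `T ↦ T' = Σ_j X_{j+1} ∂T/∂X_j` on `ℚ[X₀, X₁, …]`. -/
noncomputable def primeDeriv (T : MvPolynomial ℕ ℚ) : MvPolynomial ℕ ℚ :=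
  ∑ j ∈ T.vars, X (j + 1) * pderiv j T

/-- The operator `D(α)T = X₀·T' − α·X₁·T`. -/
noncomputable def Dop (α : ℚ) (T : MvPolynomial ℕ ℚ) : MvPolynomial ℕ ℚ :=
  X 0 * primeDeriv T - C α * (X 1 * T)

/-- The generalized binomial coefficient `a_k = C(1/2, k)`. -/
noncomputable def genBinom (k : ℕ) : ℚ :=
  (∏ i ∈ Finset.range k, ((1 : ℚ) / 2 - (i : ℚ))) / (Nat.factorial k : ℚ)

lemma degreeOf_pderiv_le (i j : ℕ) (p : MvPolynomial ℕ ℚ) :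
    degreeOf i (pderiv j p) ≤ degreeOf i p := by
  conv_lhs => rw [p.as_sum, map_sum]
  refine (degreeOf_sum_le _ _ _).trans (Finset.sup_le fun d hd => ?_)
  rw [pderiv_monomial]
  rw [degreeOf_le_iff]
  intro m hm
  have hms := support_monomial_subset hm
  simp only [Finset.mem_singleton] at hms
  subst hms
  refine le_trans ?_ (monomial_le_degreeOf i hd)
  rw [Finsupp.tsub_apply]
  omega

lemma degreeOf0_primeDeriv_le (T : MvPolynomial ℕ ℚ) :
    degreeOf 0 (primeDeriv T) ≤ degreeOf 0 T := by
  unfold primeDeriv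
  refine (degreeOf_sum_le _ _ _).trans (Finset.sup_le fun j _ => ?_)
  calc degreeOf 0 (X (j + 1) * pderiv j T)
      ≤ degreeOf 0 (X (j + 1) : MvPolynomial ℕ ℚ) + degreeOf 0 (pderiv j T) :=
        degreeOf_mul_le _ _ _
    _ ≤ 0 + degreeOf 0 T := by
        gcongr
        · rw [degreeOf_X]; simp
        · exact degreeOf_pderiv_le _ _ _
    _ = degreeOf 0 T := by omega

lemma degreeOf0_Dop_le (α : ℚ) (T : MvPolynomial ℕ ℚ) :
    degreeOf 0 (Dop α T) ≤ degreeOf 0 T + 1 := by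
  unfold Dop
  rw [sub_eq_add_neg]
  refine (degreeOf_add_le _ _ _).trans (max_le ?_ ?_)
  · calc degreeOf 0 (X 0 * primeDeriv T)
        ≤ degreeOf 0 (X 0 : MvPolynomial ℕ ℚ) + degreeOf 0 (primeDeriv T) :=
          degreeOf_mul_le _ _ _
      _ ≤ 1 + degreeOf 0 T := by
          gcongr
          · rw [degreeOf_X]; simp
          · exact degreeOf0_primeDeriv_le T
      _ = degreeOf 0 T + 1 := by omega
  · rw [degreeOf_neg]
    calc degreeOf 0 (C α * (X 1 * T)) ≤ degreeOf 0 (X 1 * T) := degreeOf_C_mul_le _ _ _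
      _ ≤ degreeOf 0 (X 1 : MvPolynomial ℕ ℚ) + degreeOf 0 T := degreeOf_mul_le _ _ _
      _ ≤ degreeOf 0 T + 1 := by rw [degreeOf_X]; simp

lemma degreeOf0_Dop_one (α : ℚ) : degreeOf 0 (Dop α 1) = 0 := by
  have h1 : primeDeriv (1 : MvPolynomial ℕ ℚ) = 0 := by
    unfold primeDeriv
    simp [vars_one]
  unfold Dop
  rw [h1, mul_zero, zero_sub, degreeOf_neg, mul_one]
  refine Nat.le_antisymm ?_ (Nat.zero_le _)
  calc degreeOf 0 (C α * X 1 : MvPolynomial ℕ ℚ) ≤ degreeOf 0 (X 1 : MvPolynomial ℕ ℚ) :=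
        degreeOf_C_mul_le _ _ _
    _ = 0 := by rw [degreeOf_X]; simp

/-- For `n ≥ 1`, every monomial `X₀^{k₀}X₁^{k₁}⋯X_n^{k_n}` occurring in the Hamilton–Jacobi
polynomial `Q_n` with nonzero coefficient satisfies `k₀ < n`. -/
theorem stmt11 (Q : ℕ → MvPolynomial ℕ ℚ) (hQ0 : Q 0 = 1)
    (hQrec : ∀ n : ℕ, 1 ≤ n → Q n =
      ∑ k ∈ Finset.Icc 1 n, ∑ s ∈ Finset.Nat.antidiagonalTuple (2 * k) (n - k),
        C (genBinom k) * ∏ i, Dop (2 * (s i : ℚ) - 1) (Q (s i))) :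
    ∀ n : ℕ, 1 ≤ n → ∀ d ∈ (Q n).support, d 0 < n := by
  have key : ∀ n : ℕ, 1 ≤ n → degreeOf 0 (Q n) + 1 ≤ n := by
    intro n
    induction n using Nat.strong_induction_on with
    | _ n ih =>
      intro hn
      rw [hQrec n hn]
      have hbound : degreeOf 0 (∑ k ∈ Finset.Icc 1 n,
          ∑ s ∈ Finset.Nat.antidiagonalTuple (2 * k) (n - k),
            C (genBinom k) * ∏ i, Dop (2 * (s i : ℚ) - 1) (Q (s i))) ≤ n - 1 := by
        refine (degreeOf_sum_le _ _ _).trans (Finset.sup_le fun k hk => ?_)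
        refine (degreeOf_sum_le _ _ _).trans (Finset.sup_le fun s hs => ?_)
        rw [Finset.mem_Icc] at hk
        rw [Finset.Nat.mem_antidiagonalTuple] at hs
        refine (degreeOf_C_mul_le _ _ _).trans ?_
        refine (degreeOf_prod_le _ _ _).trans ?_
        have hterm : ∀ i : Fin (2 * k),
            degreeOf 0 (Dop (2 * (s i : ℚ) - 1) (Q (s i))) ≤ s i := by
          intro i
          rcases Nat.eq_zero_or_pos (s i) with h0 | h1
          · rw [h0, hQ0]
            simp [degreeOf0_Dop_one]
          · have hsi_lt : s i < n := by
              have : s i ≤ n - k := hs ▸ Finset.single_le_sum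
                (f := fun i => s i) (fun _ _ => Nat.zero_le _) (Finset.mem_univ i)
              omega
            have := ih (s i) hsi_lt h1
            have h2 := degreeOf0_Dop_le (2 * (s i : ℚ) - 1) (Q (s i))
            omega
        calc ∑ i : Fin (2 * k), degreeOf 0 (Dop (2 * (s i : ℚ) - 1) (Q (s i)))
            ≤ ∑ i : Fin (2 * k), s i := Finset.sum_le_sum fun i _ => hterm i
          _ = n - k := hs
          _ ≤ n - 1 := by omega
      exact Nat.le_trans (Nat.add_le_add_right hbound 1) (le_of_eq (Nat.sub_add_cancel hn))
  intro n hn d hd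
  have h1 : degreeOf 0 (Q n) < n := Nat.lt_of_lt_of_le (Nat.lt_succ_self _) (key n hn)
  exact (degreeOf_lt_iff hn).mp h1 d hd
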